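/- For every m ≥ 2 and path-connected metric space X, dcat(X^{m−1}) ≤ dTC_m(X), where dcat denotes the distributional Lusternik–Schnirelmann category. -/

import Mathlib

open MeasureTheory unitInterval

noncomputable section

/-- The path space `P(X) = C([0,1], X)` with the compact-open topology. -/
abbrev PathSp (X : Type*) [TopologicalSpace X] : Type _ := C(unitInterval, X)

/-- The space `B_n(Z)` of probability measures on a metric space `Z` supported on at most
`n` points, as a subspace of the space of probability measures with the Lévy–Prokhorov metric. -/
def Bmeas (n : ℕ) (Z : Type*) [MetricSpace Z] : Type _ :=
  letI : MeasurableSpace Z := borel Z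
  {μ : LevyProkhorov (ProbabilityMeasure Z) //
    ∃ S : Finset Z, S.card ≤ n ∧ (LevyProkhorov.toMeasureEquiv μ : ProbabilityMeasure Z) (↑S : Set Z) = 1}

noncomputable instance (n : ℕ) (Z : Type*) [MetricSpace Z] : TopologicalSpace (Bmeas n Z) :=
  letI : MeasurableSpace Z := borel Z
  haveI : BorelSpace Z := ⟨rfl⟩
  instTopologicalSpaceSubtype

/-- The underlying probability measure of an element of `B_n(Z)`. -/
def Bmeas.meas {n : ℕ} {Z : Type*} [MetricSpace Z] (μ : Bmeas n Z) :
    @ProbabilityMeasure Z (borel Z) :=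
  LevyProkhorov.toMeasureEquiv μ.1

/-- `μ ∈ B_n(Z)` is supported on the set `A`. -/
def DistributedOn {Z : Type*} [MetricSpace Z] {n : ℕ} (μ : Bmeas n Z) (A : Set Z) : Prop :=
  ∃ S : Finset Z, (↑S : Set Z) ⊆ A ∧ Bmeas.meas μ (↑S : Set Z) = 1

/-- The time points `t_j = j/(m-1)`, `j = 0, …, m-1`, in `[0,1]`. -/
def tpt (m : ℕ) (j : Fin m) : unitInterval :=
  Set.projIcc 0 1 zero_le_one ((j : ℝ) / ((m : ℝ) - 1))

/-- A `k`-distributed `m`-navigation algorithm on `X`. -/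
def IsNavAlg (m k : ℕ) {X : Type*} [MetricSpace X]
    (s : (Fin m → X) → Bmeas k (PathSp X)) : Prop :=
  Continuous s ∧ ∀ x : Fin m → X,
    DistributedOn (s x) {φ : PathSp X | ∀ j : Fin m, φ (tpt m j) = x j}

/-- The `m`-th sequential distributional topological complexity. -/
noncomputable def dTC (m : ℕ) (X : Type*) [MetricSpace X] : ℕ∞ :=
  sInf {c : ℕ∞ | ∃ k : ℕ, c = k ∧
    ∃ s : (Fin m → X) → Bmeas (k + 1) (PathSp X), IsNavAlg m (k + 1) s}

/-- A `k`-contraction of `Y` to the point `y₀`. -/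
def IsContr (k : ℕ) {Y : Type*} [MetricSpace Y] (y₀ : Y)
    (H : Y → Bmeas k (PathSp Y)) : Prop :=
  Continuous H ∧ ∀ y : Y,
    DistributedOn (H y) {φ : PathSp Y | φ 0 = y ∧ φ 1 = y₀}

/-- The distributional Lusternik–Schnirelmann category. -/
noncomputable def dcat (Y : Type*) [MetricSpace Y] : ℕ∞ :=
  sInf {c : ℕ∞ | ∃ k : ℕ, c = k ∧
    ∃ (y₀ : Y) (H : Y → Bmeas (k + 1) (PathSp Y)), IsContr (k + 1) y₀ H}

/-- The classical `m`-th sequential topological complexity. -/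
noncomputable def TCcl (m : ℕ) (X : Type*) [TopologicalSpace X] : ℕ∞ :=
  sInf {c : ℕ∞ | ∃ k : ℕ, c = k ∧
    ∃ (U : Fin (k + 1) → Set (Fin m → X)) (s : ∀ i : Fin (k + 1), C(U i, PathSp X)),
      (∀ i, IsOpen (U i)) ∧ (∀ x, ∃ i, x ∈ U i) ∧
      ∀ (i : Fin (k + 1)) (x : U i) (j : Fin m), (s i x) (tpt m j) = (x : Fin m → X) j}

section Push

open Set Metric
open scoped ENNReal NNReal

/-- Pushforward along a 1-Lipschitz map does not increase the Lévy–Prokhorov edistance. -/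
lemma levyProkhorovEDist_map_le {Ω Ω' : Type*} [MeasurableSpace Ω] [MetricSpace Ω] [BorelSpace Ω]
    [MeasurableSpace Ω'] [MetricSpace Ω'] [BorelSpace Ω'] {g : Ω → Ω'} (hg : LipschitzWith 1 g)
    (μ ν : Measure Ω) [IsProbabilityMeasure μ] [IsProbabilityMeasure ν] :
    levyProkhorovEDist (μ.map g) (ν.map g) ≤ levyProkhorovEDist μ ν := by
  have hmg : Measurable g := hg.continuous.measurable
  have key : ∀ (μ ν : Measure Ω) (ε : ℝ≥0∞) (B : Set Ω'),
      levyProkhorovEDist μ ν < ε → MeasurableSet B →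
      (μ.map g) B ≤ (ν.map g) (Metric.thickening ε.toReal B) + ε := by
    intro μ ν ε B hε hB
    rw [Measure.map_apply hmg hB,
      Measure.map_apply hmg Metric.isOpen_thickening.measurableSet]
    refine (left_measure_le_of_levyProkhorovEDist_lt hε (hmg hB)).trans ?_
    refine add_le_add (measure_mono ?_) le_rfl
    intro x hx
    rw [Metric.mem_thickening_iff_exists_edist_lt] at hx
    obtain ⟨y, hyB, hxy⟩ := hx
    rw [Set.mem_preimage, Metric.mem_thickening_iff_exists_edist_lt]
    exact ⟨g y, hyB, lt_of_le_of_lt (by simpa using hg.edist_le_mul x y) hxy⟩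
  refine levyProkhorovEDist_le_of_forall _ _ _ (fun ε B hε hεt hB => ⟨?_, ?_⟩)
  · exact key μ ν ε B hε hB
  · exact key ν μ ε B (levyProkhorovEDist_comm μ ν ▸ hε) hB

/-- A measure supported on a finite set pushes forward to a measure supported on the image. -/
lemma map_finset_support_one {Ω Ω' : Type*} [MeasurableSpace Ω] [MetricSpace Ω] [BorelSpace Ω]
    [MeasurableSpace Ω'] [MetricSpace Ω'] [BorelSpace Ω'] [DecidableEq Ω'] {g : Ω → Ω'}
    (hg : Continuous g)
    (μ : ProbabilityMeasure Ω) (S : Finset Ω) (hS : μ (↑S : Set Ω) = 1) :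
    μ.map hg.measurable.aemeasurable (↑(S.image g) : Set Ω') = 1 := by
  refine le_antisymm (ProbabilityMeasure.apply_le_one _ _) ?_
  rw [ProbabilityMeasure.map_apply _ _ ((S.image g).finite_toSet.measurableSet)]
  calc (1 : ℝ≥0) = μ (↑S : Set Ω) := hS.symm
    _ ≤ μ (g ⁻¹' ↑(S.image g)) := by
        refine ProbabilityMeasure.apply_mono μ ?_
        intro z hz
        simp only [Set.mem_preimage, Finset.coe_image, Set.mem_image]
        exact ⟨z, hz, rfl⟩

/-- Pushforward of finitely supported probability measures along a `1`-Lipschitz map. -/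
noncomputable def Bmeas.push {Z Z' : Type*} [MetricSpace Z] [MetricSpace Z'] {n : ℕ}
    (g : Z → Z') (hg : LipschitzWith 1 g) (μ : Bmeas n Z) : Bmeas n Z' :=
  letI : MeasurableSpace Z := borel Z
  haveI : BorelSpace Z := ⟨rfl⟩
  letI : MeasurableSpace Z' := borel Z'
  haveI : BorelSpace Z' := ⟨rfl⟩
  letI : DecidableEq Z' := Classical.decEq Z'
  ⟨LevyProkhorov.toMeasureEquiv.symm
      ((Bmeas.meas μ).map hg.continuous.measurable.aemeasurable),
    by
      obtain ⟨S, hcard, hS⟩ := μ.2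
      exact ⟨S.image g, Finset.card_image_le.trans hcard,
        map_finset_support_one hg.continuous (Bmeas.meas μ) S hS⟩⟩

lemma Bmeas.push_meas {Z Z' : Type*} [MetricSpace Z] [MetricSpace Z'] {n : ℕ}
    (g : Z → Z') (hg : LipschitzWith 1 g) (μ : Bmeas n Z) :
    letI : MeasurableSpace Z := borel Z
    haveI : BorelSpace Z := ⟨rfl⟩
    letI : MeasurableSpace Z' := borel Z'
    haveI : BorelSpace Z' := ⟨rfl⟩
    Bmeas.meas (Bmeas.push g hg μ)
      = (Bmeas.meas μ).map hg.continuous.measurable.aemeasurable := rfl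

lemma Bmeas.push_continuous {Z Z' : Type*} [MetricSpace Z] [MetricSpace Z'] {n : ℕ}
    (g : Z → Z') (hg : LipschitzWith 1 g) :
    Continuous (Bmeas.push (n := n) g hg) := by
  letI : MeasurableSpace Z := borel Z
  haveI : BorelSpace Z := ⟨rfl⟩
  letI : MeasurableSpace Z' := borel Z'
  haveI : BorelSpace Z' := ⟨rfl⟩
  apply Continuous.subtype_mk
  have hlip : LipschitzWith 1 (fun μ : LevyProkhorov (ProbabilityMeasure Z) =>
      (LevyProkhorov.toMeasureEquiv.symm
        ((LevyProkhorov.toMeasureEquiv μ).map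
          hg.continuous.measurable.aemeasurable) :
        LevyProkhorov (ProbabilityMeasure Z'))) := by
    apply LipschitzWith.of_dist_le_mul
    intro μ ν
    simp only [NNReal.coe_one, one_mul]
    rw [LevyProkhorov.dist_probabilityMeasure_def, LevyProkhorov.dist_probabilityMeasure_def, levyProkhorovDist,
      levyProkhorovDist]
    apply ENNReal.toReal_mono (levyProkhorovEDist_ne_top _ _)
    exact levyProkhorovEDist_map_le hg (LevyProkhorov.toMeasureEquiv μ).toMeasure
      (LevyProkhorov.toMeasureEquiv ν).toMeasure
  exact hlip.continuous.comp continuous_subtype_val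

lemma Bmeas.push_distributedOn {Z Z' : Type*} [MetricSpace Z] [MetricSpace Z'] {n : ℕ}
    {g : Z → Z'} (hg : LipschitzWith 1 g) {μ : Bmeas n Z} {A : Set Z} {A' : Set Z'}
    (hA : ∀ z ∈ A, g z ∈ A') (h : DistributedOn μ A) :
    DistributedOn (Bmeas.push g hg μ) A' := by
  letI : MeasurableSpace Z := borel Z
  haveI : BorelSpace Z := ⟨rfl⟩
  letI : MeasurableSpace Z' := borel Z'
  haveI : BorelSpace Z' := ⟨rfl⟩
  letI : DecidableEq Z' := Classical.decEq Z'
  obtain ⟨S, hsub, hone⟩ := h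
  refine ⟨S.image g, ?_, ?_⟩
  · rw [Finset.coe_image]
    rintro z' ⟨z, hz, rfl⟩
    exact hA z (hsub hz)
  · exact map_finset_support_one hg.continuous (Bmeas.meas μ) S hone

end Push

/-- For every `m ≥ 2` and path-connected metric space `X`, `dcat(X^{m-1}) ≤ dTC_m(X)`. -/
theorem dcat_pow_le_dTC (m : ℕ) (hm : 2 ≤ m) (X : Type) [MetricSpace X]
    [PathConnectedSpace X] :
    dcat (Fin (m - 1) → X) ≤ dTC m X := by
  classical
  have hne : Nonempty X := PathConnectedSpace.nonempty
  obtain ⟨x₀⟩ := hne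
  apply sInf_le_sInf
  rintro c ⟨k, rfl, s, hs⟩
  refine ⟨k, rfl, ?_⟩
  -- the inclusion `X^{m-1} → X^m` putting `x₀` in the last coordinate
  set ι : (Fin (m - 1) → X) → (Fin m → X) :=
    fun y j => if h : (j : ℕ) < m - 1 then y ⟨j, h⟩ else x₀ with hι_def
  have hι : Continuous ι := by
    apply continuous_pi
    intro j
    by_cases h : (j : ℕ) < m - 1
    · simp only [hι_def, dif_pos h]
      exact continuous_apply _
    · simp only [hι_def, dif_neg h]
      exact continuous_const
  -- reparametrizations
  set sig : Fin m → unitInterval → unitInterval := fun j t =>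
    Set.projIcc 0 1 zero_le_one ((tpt m j : ℝ) + (t : ℝ) * (1 - (tpt m j : ℝ))) with hsig_def
  have hsigcont : ∀ j, Continuous (sig j) := by
    intro j
    apply continuous_projIcc.comp
    fun_prop
  have hsig0 : ∀ j, sig j 0 = tpt m j := by
    intro j
    simp only [hsig_def, Set.Icc.coe_zero, zero_mul, add_zero]
    exact Set.projIcc_val zero_le_one (tpt m j)
  have hsig1 : ∀ j, sig j 1 = 1 := by
    intro j
    simp only [hsig_def, Set.Icc.coe_one, one_mul, add_sub_cancel]
    exact Set.projIcc_right zero_le_one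
  -- the last time point is 1
  have hmlt : m - 1 < m := by omega
  have htlast : tpt m ⟨m - 1, hmlt⟩ = 1 := by
    have h1 : ((m : ℝ) - 1) ≠ 0 := by
      have : (2 : ℝ) ≤ (m : ℝ) := by exact_mod_cast hm
      linarith
    have : (((⟨m - 1, hmlt⟩ : Fin m) : ℕ) : ℝ) = (m : ℝ) - 1 := by
      simp only [Fin.val_mk]
      push_cast [Nat.cast_sub (by omega : 1 ≤ m)]
      ring
    unfold tpt
    rw [this, div_self h1]
    exact Set.projIcc_right zero_le_one
  -- the map from paths in `X` to paths in `X^{m-1}`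
  set g : PathSp X → PathSp (Fin (m - 1) → X) := fun φ =>
    ⟨fun t j => φ (sig (Fin.castLE (Nat.sub_le m 1) j) t),
      continuous_pi fun j => φ.continuous.comp (hsigcont _)⟩ with hg_def
  have hg : LipschitzWith 1 g := by
    apply LipschitzWith.of_dist_le_mul
    intro φ ψ
    simp only [NNReal.coe_one, one_mul]
    refine (ContinuousMap.dist_le dist_nonneg).mpr ?_
    intro t
    refine (dist_pi_le_iff dist_nonneg).mpr ?_
    intro j
    exact ContinuousMap.dist_apply_le_dist _
  refine ⟨fun _ => x₀, fun y => Bmeas.push g hg (s (ι y)), ?_, ?_⟩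
  · exact (Bmeas.push_continuous g hg).comp (hs.1.comp hι)
  · intro y
    refine Bmeas.push_distributedOn hg ?_ (hs.2 (ι y))
    intro φ hφ
    simp only [Set.mem_setOf_eq] at hφ ⊢
    constructor
    · funext j
      show φ (sig (Fin.castLE (Nat.sub_le m 1) j) 0) = y j
      rw [hsig0, hφ]
      have hj : ((Fin.castLE (Nat.sub_le m 1) j : Fin m) : ℕ) < m - 1 := j.2
      simp only [hι_def, dif_pos hj]
      exact congrArg y (Fin.ext rfl)
    · funext j
      show φ (sig (Fin.castLE (Nat.sub_le m 1) j) 1) = x₀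
      rw [hsig1]
      have := hφ ⟨m - 1, hmlt⟩
      rw [htlast] at this
      rw [this]
      simp [hι_def]
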